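/- For every 0 < ψ_m < π there exists σ > 0 depending only on ψ_m such that every convex quadrilateral K satisfying mac(ψ_m) satisfies at least one of the following: (1) K satisfies DAC(ψ_m, π − ψ_m/2), i.e. every interior angle θ of K obeys ψ_m ≤ θ ≤ π − ψ_m/2; or (2) K is σ-regular, i.e. diam(K)/ρ ≤ σ. -/

import Mathlib

noncomputable section

open Real

/-- The Euclidean plane. -/
abbrev E2 := EuclideanSpace ℝ (Fin 2)

/-- The point (x, y) of the Euclidean plane. -/
def pt2 (x y : ℝ) : E2 := WithLp.toLp 2 ![x, y]

/-- The planar cross product (determinant) of two vectors. -/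
def cross2 (u v : E2) : ℝ := u 0 * v 1 - u 1 * v 0

/-- `V : Fin 4 → E2` lists the vertices of a convex quadrilateral in counterclockwise
order: each consecutive triple is positively oriented. -/
def ccwQuad (V : Fin 4 → E2) : Prop :=
  ∀ i : Fin 4, 0 < cross2 (V (i + 1) - V i) (V (i + 2) - V i)

/-- The convex quadrilateral spanned by the four vertices. -/
def quadSet (V : Fin 4 → E2) : Set E2 := convexHull ℝ (Set.range V)

/-- The interior angle of the quadrilateral `V` at the vertex `V i`. -/
def intAngle (V : Fin 4 → E2) (i : Fin 4) : ℝ :=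
  EuclideanGeometry.angle (V (i - 1)) (V i) (V (i + 1))

/-- All three interior angles of the triangle `A B C` are at most `ψ`. -/
def triMAC (A B C : E2) (ψ : ℝ) : Prop :=
  EuclideanGeometry.angle C A B ≤ ψ ∧ EuclideanGeometry.angle A B C ≤ ψ ∧
    EuclideanGeometry.angle B C A ≤ ψ

/-- The regular decomposition property `RDP(N, ψM)`: one diagonal `d1` divides the
quadrilateral into two triangles whose interior angles are all `≤ ψM`, and the other
diagonal `d2` satisfies `|d2| ≤ N·|d1|`. -/
def RDP (V : Fin 4 → E2) (N ψM : ℝ) : Prop :=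
  (dist (V 1) (V 3) ≤ N * dist (V 0) (V 2) ∧
    triMAC (V 0) (V 1) (V 2) ψM ∧ triMAC (V 0) (V 2) (V 3) ψM) ∨
  (dist (V 0) (V 2) ≤ N * dist (V 1) (V 3) ∧
    triMAC (V 1) (V 2) (V 3) ψM ∧ triMAC (V 3) (V 0) (V 1) ψM)

/-- Two subsets of the plane are `C`-equivalent if an affine map `X ↦ B X + P` with
`‖B‖ ≤ C` and `‖B⁻¹‖ ≤ C` maps one onto the other. -/
def CEquiv (C : ℝ) (K K' : Set E2) : Prop :=
  ∃ B : E2 ≃L[ℝ] E2, ∃ P : E2,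
    ‖(B : E2 →L[ℝ] E2)‖ ≤ C ∧ ‖(B.symm : E2 →L[ℝ] E2)‖ ≤ C ∧
    (fun X => B X + P) '' K = K'

/-- The quadrilateral `K(a,b,ta,tb)` with vertices `(0,0), (a,0), (ta,tb), (0,b)`. -/
def quadK (a b ta tb : ℝ) : Set E2 :=
  convexHull ℝ {pt2 0 0, pt2 a 0, pt2 ta tb, pt2 0 b}

/-- Length of the side `l` joining `V3 = (ta, tb)` and `V4 = (0, b)` of `K(a,b,ta,tb)`. -/
def lenl (b ta tb : ℝ) : ℝ := Real.sqrt (ta ^ 2 + (b - tb) ^ 2)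

/-- The minimum of the four side lengths of `K(a,b,ta,tb)`. -/
def sideMin (a b ta tb : ℝ) : ℝ :=
  min (min a b) (min (lenl b ta tb) (Real.sqrt ((a - ta) ^ 2 + tb ^ 2)))

/-- The sine of the interior angle α at `V4 = (0,b)` of the triangle with vertices
`V2 = (a,0)`, `V3 = (ta,tb)`, `V4 = (0,b)`. -/
def sinAlpha (a b ta tb : ℝ) : ℝ :=
  Real.sin (EuclideanGeometry.angle (pt2 a 0) (pt2 0 b) (pt2 ta tb))

/-- Twice the inradius: `ρ = 2·sup{ r ≥ 0 : some closed ball of radius r fits in K }`. -/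
def rho (K : Set E2) : ℝ :=
  2 * sSup {r : ℝ | 0 ≤ r ∧ ∃ c : E2, Metric.closedBall c r ⊆ K}


/-! ### auxiliary lemmas -/

lemma MyQuad.inner2 (u v : E2) : (inner ℝ u v : ℝ) = u 0 * v 0 + u 1 * v 1 := by
  simp [PiLp.inner_apply, Fin.sum_univ_two, RCLike.inner_apply, conj_trivial]; ring

lemma MyQuad.normmul (u v : E2) : (‖u‖ * ‖v‖)^2 = (inner ℝ u v : ℝ)^2 + cross2 u v ^2 := by
  have hu : ‖u‖^2 = (inner ℝ u u : ℝ) := by rw [real_inner_self_eq_norm_sq]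
  have hv : ‖v‖^2 = (inner ℝ v v : ℝ) := by rw [real_inner_self_eq_norm_sq]
  have h : (‖u‖ * ‖v‖)^2 = ‖u‖^2 * ‖v‖^2 := by ring
  rw [h, hu, hv, MyQuad.inner2, MyQuad.inner2, MyQuad.inner2]
  simp [cross2]; ring

lemma MyQuad.sin_angle_mul {u v : E2} (hu : u ≠ 0) (hv : v ≠ 0) :
    ‖u‖ * ‖v‖ * Real.sin (InnerProductGeometry.angle u v) = |cross2 u v| := by
  have hcos := InnerProductGeometry.cos_angle u v
  have hnn : 0 ≤ Real.sin (InnerProductGeometry.angle u v) :=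
    Real.sin_nonneg_of_nonneg_of_le_pi (InnerProductGeometry.angle_nonneg u v)
      (InnerProductGeometry.angle_le_pi u v)
  have hnu : (0:ℝ) < ‖u‖ := norm_pos_iff.mpr hu
  have hnv : (0:ℝ) < ‖v‖ := norm_pos_iff.mpr hv
  have hsq : (‖u‖ * ‖v‖ * Real.sin (InnerProductGeometry.angle u v))^2 = cross2 u v ^2 := by
    have hs2 : Real.sin (InnerProductGeometry.angle u v)^2
        = 1 - Real.cos (InnerProductGeometry.angle u v)^2 := by
      have := Real.sin_sq_add_cos_sq (InnerProductGeometry.angle u v); linarith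
    have h : (‖u‖ * ‖v‖ * Real.sin (InnerProductGeometry.angle u v))^2
        = (‖u‖*‖v‖)^2 * (1 - Real.cos (InnerProductGeometry.angle u v)^2) := by
      rw [← hs2]; ring
    rw [h, hcos]
    have hne : ‖u‖ * ‖v‖ ≠ 0 := by positivity
    field_simp
    have h2 := MyQuad.normmul u v; linarith
  have h1 : 0 ≤ ‖u‖ * ‖v‖ * Real.sin (InnerProductGeometry.angle u v) := by positivity
  calc ‖u‖ * ‖v‖ * Real.sin (InnerProductGeometry.angle u v)
      = Real.sqrt ((‖u‖ * ‖v‖ * Real.sin (InnerProductGeometry.angle u v))^2) :=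
        (Real.sqrt_sq h1).symm
    _ = Real.sqrt (cross2 u v ^2) := by rw [hsq]
    _ = |cross2 u v| := Real.sqrt_sq_eq_abs _

lemma MyQuad.eangle_eq (p q r : E2) :
    EuclideanGeometry.angle p q r = InnerProductGeometry.angle (p - q) (r - q) := rfl

lemma MyQuad.id_sin (u v w : E2) :
    cross2 u v * (inner ℝ v w : ℝ) + (inner ℝ u v : ℝ) * cross2 v w
      = (inner ℝ v v : ℝ) * cross2 u w := by
  simp only [cross2, MyQuad.inner2]; ring

lemma MyQuad.id_cos (u v w : E2) :
    (inner ℝ u v : ℝ) * (inner ℝ v w : ℝ) - cross2 u v * cross2 v w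
      = (inner ℝ v v : ℝ) * (inner ℝ u w : ℝ) := by
  simp only [cross2, MyQuad.inner2]; ring

open InnerProductGeometry in
lemma MyQuad.angle_add_of_cross {u v w : E2} (hu : u ≠ 0) (hv : v ≠ 0) (hw : w ≠ 0)
    (huv : 0 < cross2 u v) (hvw : 0 < cross2 v w) (huw : 0 < cross2 u w) :
    angle u v + angle v w = angle u w := by
  set a := angle u v with ha
  set b := angle v w with hb
  set c := angle u w with hc
  have hnu : (0:ℝ) < ‖u‖ := norm_pos_iff.mpr hu
  have hnv : (0:ℝ) < ‖v‖ := norm_pos_iff.mpr hv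
  have hnw : (0:ℝ) < ‖w‖ := norm_pos_iff.mpr hw
  have Sa : ‖u‖ * ‖v‖ * Real.sin a = cross2 u v :=
    (MyQuad.sin_angle_mul hu hv).trans (abs_of_pos huv)
  have Sb : ‖v‖ * ‖w‖ * Real.sin b = cross2 v w :=
    (MyQuad.sin_angle_mul hv hw).trans (abs_of_pos hvw)
  have Sc : ‖u‖ * ‖w‖ * Real.sin c = cross2 u w :=
    (MyQuad.sin_angle_mul hu hw).trans (abs_of_pos huw)
  have Ca : ‖u‖ * ‖v‖ * Real.cos a = (inner ℝ u v : ℝ) := by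
    rw [ha, InnerProductGeometry.cos_angle]; field_simp
  have Cb : ‖v‖ * ‖w‖ * Real.cos b = (inner ℝ v w : ℝ) := by
    rw [hb, InnerProductGeometry.cos_angle]; field_simp
  have Cc : ‖u‖ * ‖w‖ * Real.cos c = (inner ℝ u w : ℝ) := by
    rw [hc, InnerProductGeometry.cos_angle]; field_simp
  have hvv : (inner ℝ v v : ℝ) = ‖v‖ * ‖v‖ := real_inner_self_eq_norm_mul_norm v
  have hXY : (0:ℝ) < ‖u‖ * ‖v‖ * (‖v‖ * ‖w‖) := by positivity
  have keysin : Real.sin (a + b) = Real.sin c := by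
    have key : (‖u‖ * ‖v‖) * (‖v‖ * ‖w‖) * Real.sin (a + b)
        = (‖u‖ * ‖v‖) * (‖v‖ * ‖w‖) * Real.sin c := by
      rw [Real.sin_add]
      linear_combination (‖v‖*‖w‖*Real.cos b) * Sa + (cross2 u v) * Cb
        + (‖v‖*‖w‖*Real.sin b) * Ca + (inner ℝ u v : ℝ) * Sb + MyQuad.id_sin u v w
        - (inner ℝ v v : ℝ) * Sc + (‖u‖*‖w‖*Real.sin c) * hvv
    exact mul_left_cancel₀ (ne_of_gt hXY) (by linear_combination key)
  have keycos : Real.cos (a + b) = Real.cos c := by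
    have key : (‖u‖ * ‖v‖) * (‖v‖ * ‖w‖) * Real.cos (a + b)
        = (‖u‖ * ‖v‖) * (‖v‖ * ‖w‖) * Real.cos c := by
      rw [Real.cos_add]
      linear_combination (‖v‖*‖w‖*Real.cos b) * Ca + (inner ℝ u v : ℝ) * Cb
        - (‖v‖*‖w‖*Real.sin b) * Sa - (cross2 u v) * Sb + MyQuad.id_cos u v w
        - (inner ℝ v v : ℝ) * Cc + (‖u‖*‖w‖*Real.cos c) * hvv
    exact mul_left_cancel₀ (ne_of_gt hXY) (by linear_combination key)
  have hsina : 0 < Real.sin a := by nlinarith [Sa, huv, mul_pos hnu hnv]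
  have hsinb : 0 < Real.sin b := by nlinarith [Sb, hvw, mul_pos hnv hnw]
  have hsinc : 0 < Real.sin c := by nlinarith [Sc, huw, mul_pos hnu hnw]
  have ha0 : 0 ≤ a := angle_nonneg u v
  have hb0 : 0 ≤ b := angle_nonneg v w
  have hc0 : 0 ≤ c := angle_nonneg u w
  have hcpi : c ≤ π := angle_le_pi u w
  have hapi : a < π := lt_of_le_of_ne (angle_le_pi u v)
      (fun h => by rw [h] at hsina; simp at hsina)
  have hbpi : b < π := lt_of_le_of_ne (angle_le_pi v w)
      (fun h => by rw [h] at hsinb; simp at hsinb)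
  by_cases hab : a + b ≤ π
  · exact Real.injOn_cos ⟨by linarith, hab⟩ ⟨hc0, hcpi⟩ keycos
  · push_neg at hab
    exfalso
    have h2 : 2 * π - (a + b) ∈ Set.Icc (0:ℝ) π := ⟨by linarith, by linarith⟩
    have hcos2 : Real.cos (2 * π - (a + b)) = Real.cos c := by
      rw [Real.cos_sub, Real.cos_two_pi, Real.sin_two_pi]; simp [keycos]
    have heq : 2 * π - (a + b) = c := Real.injOn_cos h2 ⟨hc0, hcpi⟩ hcos2
    have h3 : Real.sin (2 * π - (a + b)) = - Real.sin (a+b) := by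
      rw [Real.sin_sub, Real.sin_two_pi, Real.cos_two_pi]; ring
    rw [heq, keysin] at h3
    linarith

lemma MyQuad.dist_coord (A B : E2) :
    dist A B = Real.sqrt ((A 0 - B 0)^2 + (A 1 - B 1)^2) := by
  rw [dist_eq_norm, EuclideanSpace.norm_eq]
  simp [Fin.sum_univ_two, sq_abs]

lemma MyQuad.lin_bound (α β : ℝ) (h : E2) :
    α * h 0 + β * h 1 ≤ Real.sqrt (α^2+β^2) * ‖h‖ := by
  have hn : ‖h‖ = Real.sqrt (h 0^2 + h 1^2) := by
    rw [EuclideanSpace.norm_eq]; simp [Fin.sum_univ_two, sq_abs]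
  rw [hn, ← Real.sqrt_mul (by positivity)]
  have h1 : α * h 0 + β * h 1 ≤ |α * h 0 + β * h 1| := le_abs_self _
  have h2 : |α * h 0 + β * h 1| = Real.sqrt ((α * h 0 + β * h 1)^2) :=
    (Real.sqrt_sq_eq_abs _).symm
  rw [h2] at h1
  refine h1.trans (Real.sqrt_le_sqrt ?_)
  nlinarith [sq_nonneg (α * h 1 - β * h 0)]

lemma MyQuad.cross2_cyc (X Y Z : E2) : cross2 (Y-X) (Z-X) = cross2 (Z-Y) (X-Y) := by
  simp [cross2]; ring

lemma MyQuad.cross_ne {X Y Z : E2} (h : 0 < cross2 (Y - X) (Z - X)) :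
    X ≠ Y ∧ X ≠ Z ∧ Y ≠ Z := by
  refine ⟨?_, ?_, ?_⟩
  · rintro rfl; simp [cross2] at h
  · rintro rfl; simp [cross2] at h
  · rintro rfl
    have h0 : cross2 (Y - X) (Y - X) = 0 := by simp [cross2]; ring
    rw [h0] at h; exact lt_irrefl _ h

lemma MyQuad.cross_angle {X Y Z : E2} (h : 0 < cross2 (Y - X) (Z - X)) :
    dist X Y * dist X Z * Real.sin (EuclideanGeometry.angle Y X Z)
      = cross2 (Y - X) (Z - X) := by
  obtain ⟨hXY, hXZ, _⟩ := MyQuad.cross_ne h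
  rw [MyQuad.eangle_eq, dist_comm X Y, dist_comm X Z, dist_eq_norm, dist_eq_norm,
    MyQuad.sin_angle_mul (sub_ne_zero.mpr (Ne.symm hXY)) (sub_ne_zero.mpr (Ne.symm hXZ)),
    abs_of_pos h]

lemma MyQuad.sin_lb {t γ : ℝ} (ht : 0 < t) (ht2 : t ≤ π/2) (h1 : t ≤ γ) (h2 : γ ≤ π - t) :
    Real.sin t ≤ Real.sin γ := by
  rcases le_or_gt γ (π/2) with h|h
  · exact Real.strictMonoOn_sin.monotoneOn ⟨by linarith, ht2⟩ ⟨by linarith, h⟩ h1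
  · rw [← Real.sin_pi_sub γ]
    exact Real.strictMonoOn_sin.monotoneOn ⟨by linarith, ht2⟩
      ⟨by linarith, by linarith⟩ (by linarith)

lemma MyQuad.ball_subset_triangle (A B C : E2) (hS : 0 < cross2 (B - A) (C - A)) :
    Metric.closedBall ((3:ℝ)⁻¹ • (A + B + C))
      (cross2 (B - A) (C - A) / (3 * (dist A B + dist A C + dist B C)))
      ⊆ convexHull ℝ {A, B, C} := by
  intro x hx
  set S := cross2 (B - A) (C - A) with hSdef
  set M := dist A B + dist A C + dist B C with hMdef
  set P : E2 := (3:ℝ)⁻¹ • (A + B + C) with hPdef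
  set r := S / (3 * M) with hrdef
  have hAB : A ≠ B := by rintro rfl; simp [cross2, hSdef] at hS
  have hM : 0 < M := by
    rw [hMdef]
    have h1 : 0 < dist A B := dist_pos.mpr hAB
    have h2 := dist_nonneg (x := A) (y := C)
    have h3 := dist_nonneg (x := B) (y := C)
    linarith
  have hr0 : 0 ≤ r := by positivity
  have hxP : ‖x - P‖ ≤ r := by
    rw [Metric.mem_closedBall, dist_eq_norm] at hx; exact hx
  have hPc : ∀ i : Fin 2, P i = (A i + B i + C i)/3 := by
    intro i; rw [hPdef]; simp [PiLp.smul_apply, PiLp.add_apply]; ring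
  set NA := cross2 (B - x) (C - x) with hNA
  set NB := cross2 (C - x) (A - x) with hNB
  set NC := cross2 (A - x) (B - x) with hNC
  have hsub : ∀ (u v : E2) (i : Fin 2), (u - v) i = u i - v i := fun u v i => rfl
  have hsum : NA + NB + NC = S := by
    rw [hNA, hNB, hNC, hSdef]; simp only [cross2, hsub]; ring
  have keybound : ∀ (N α β : ℝ), (N = S/3 + (α * (x - P) 0 + β * (x - P) 1)) →
      Real.sqrt (α^2 + β^2) ≤ M → 0 ≤ N := by
    intro N α β hNid hnorm
    have h1 : α * (x - P) 0 + β * (x - P) 1 ≤ Real.sqrt (α^2+β^2) * ‖x - P‖ :=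
      MyQuad.lin_bound α β (x - P)
    have h2 : -(α * (x - P) 0 + β * (x - P) 1) ≤ Real.sqrt (α^2+β^2) * ‖x - P‖ := by
      have h5 := MyQuad.lin_bound (-α) (-β) (x - P)
      have he : (-α)^2 + (-β)^2 = α^2 + β^2 := by ring
      rw [he] at h5; linarith
    have h3 : Real.sqrt (α^2+β^2) * ‖x - P‖ ≤ M * r := by
      apply mul_le_mul hnorm hxP (norm_nonneg _) (le_of_lt hM)
    have h4 : M * r = S / 3 := by
      rw [hrdef]; field_simp
    nlinarith
  have hdBC : dist B C = Real.sqrt ((B 1 - C 1)^2 + (C 0 - B 0)^2) := by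
    rw [MyQuad.dist_coord]; congr 1; ring
  have hdCA : dist A C = Real.sqrt ((C 1 - A 1)^2 + (A 0 - C 0)^2) := by
    rw [MyQuad.dist_coord]; congr 1; ring
  have hdAB : dist A B = Real.sqrt ((A 1 - B 1)^2 + (B 0 - A 0)^2) := by
    rw [MyQuad.dist_coord]; congr 1; ring
  have hNA0 : 0 ≤ NA := by
    refine keybound NA (B 1 - C 1) (C 0 - B 0) ?_ ?_
    · rw [hNA, hSdef]; simp only [cross2, hsub, hPc]; ring
    · rw [← hdBC, hMdef]
      have h1 := dist_nonneg (x := A) (y := B); have h2 := dist_nonneg (x := A) (y := C)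
      linarith
  have hNB0 : 0 ≤ NB := by
    refine keybound NB (C 1 - A 1) (A 0 - C 0) ?_ ?_
    · rw [hNB, hSdef]; simp only [cross2, hsub, hPc]; ring
    · rw [← hdCA, hMdef]
      have h1 := dist_nonneg (x := A) (y := B); have h2 := dist_nonneg (x := B) (y := C)
      linarith
  have hNC0 : 0 ≤ NC := by
    refine keybound NC (A 1 - B 1) (B 0 - A 0) ?_ ?_
    · rw [hNC, hSdef]; simp only [cross2, hsub, hPc]; ring
    · rw [← hdAB, hMdef]
      have h1 := dist_nonneg (x := A) (y := C); have h2 := dist_nonneg (x := B) (y := C)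
      linarith
  have hmem := Finset.centerMass_mem_convexHull (Finset.univ : Finset (Fin 3))
    (w := ![NA, NB, NC]) (z := ![A, B, C]) (s := ({A, B, C} : Set E2))
    (fun i _ => by fin_cases i <;> simpa)
    (by rw [Fin.sum_univ_three]; simp only [Matrix.cons_val_zero, Matrix.cons_val_one,
          Matrix.head_cons, Matrix.cons_val_two, Matrix.tail_cons]; rw [hsum]; exact hS)
    (fun i _ => by fin_cases i <;> simp)
  have hcm : (Finset.univ : Finset (Fin 3)).centerMass ![NA, NB, NC] ![A, B, C] = x := by
    rw [Finset.centerMass]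
    rw [Fin.sum_univ_three, Fin.sum_univ_three]
    simp only [Matrix.cons_val_zero, Matrix.cons_val_one, Matrix.head_cons,
      Matrix.cons_val_two, Matrix.tail_cons]
    rw [hsum]
    ext i
    have h6 : (S⁻¹ • (NA • A + NB • B + NC • C)) i
        = S⁻¹ * (NA * A i + NB * B i + NC * C i) := by
      simp [PiLp.smul_apply, PiLp.add_apply]; ring
    rw [h6]
    have key : NA * A i + NB * B i + NC * C i = S * x i := by
      fin_cases i <;>
        (rw [hNA, hNB, hNC, hSdef]; simp only [cross2, hsub, Fin.zero_eta, Fin.mk_one]; ring)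
    rw [key]
    field_simp
  rwa [hcm] at hmem

lemma MyQuad.rho_ge {K : Set E2} (hb : Bornology.IsBounded K) {c : E2} {r : ℝ}
    (hr : 0 ≤ r) (hball : Metric.closedBall c r ⊆ K) : 2 * r ≤ rho K := by
  have hbdd : BddAbove {r : ℝ | 0 ≤ r ∧ ∃ c : E2, Metric.closedBall c r ⊆ K} := by
    refine ⟨Metric.diam K, ?_⟩
    rintro r' ⟨hr0', c', hball'⟩
    set u : E2 := EuclideanSpace.single 0 (1:ℝ) with hu
    have hnu : ‖u‖ = 1 := by rw [hu, EuclideanSpace.norm_single]; norm_num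
    have hmem1 : c' + r' • u ∈ K := by
      apply hball'
      rw [Metric.mem_closedBall, dist_eq_norm]
      have : c' + r' • u - c' = r' • u := by abel
      rw [this, norm_smul, hnu]
      simp [abs_of_nonneg hr0']
    have hmem2 : c' - r' • u ∈ K := by
      apply hball'
      rw [Metric.mem_closedBall, dist_eq_norm]
      have : c' - r' • u - c' = -(r' • u) := by abel
      rw [this, norm_neg, norm_smul, hnu]
      simp [abs_of_nonneg hr0']
    have hdist : dist (c' + r' • u) (c' - r' • u) = 2 * r' := by
      rw [dist_eq_norm]
      have : c' + r' • u - (c' - r' • u) = (2 * r') • u := by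
        rw [two_mul, add_smul]; abel
      rw [this, norm_smul, hnu]
      simp [abs_of_nonneg hr0']
    have h2 : 2 * r' ≤ Metric.diam K := by
      rw [← hdist]; exact Metric.dist_le_diam_of_mem hb hmem1 hmem2
    linarith
  have hle : r ≤ sSup {r : ℝ | 0 ≤ r ∧ ∃ c : E2, Metric.closedBall c r ⊆ K} :=
    le_csSup hbdd ⟨hr, c, hball⟩
  rw [rho]; linarith

lemma MyQuad.ccw_rot (V : Fin 4 → E2) (k : Fin 4) (h : ccwQuad V) :
    ccwQuad (fun i => V (i + k)) := by
  intro i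
  have h1 := h (i + k)
  rwa [add_right_comm i k 1, add_right_comm i k 2] at h1

lemma MyQuad.intAngle_rot (V : Fin 4 → E2) (k : Fin 4) (i : Fin 4) :
    intAngle (fun j => V (j + k)) i = intAngle V (i + k) := by
  have e1 : i - 1 + k = i + k - 1 := by revert i k; decide
  have e2 : i + 1 + k = i + k + 1 := by revert i k; decide
  show EuclideanGeometry.angle (V (i - 1 + k)) (V (i + k)) (V (i + 1 + k)) = _
  rw [e1, e2]
  rfl

lemma MyQuad.range_rot (V : Fin 4 → E2) (k : Fin 4) :
    Set.range (fun j => V (j + k)) = Set.range V := by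
  ext x
  constructor
  · rintro ⟨i, rfl⟩; exact ⟨i + k, rfl⟩
  · rintro ⟨i, rfl⟩; exact ⟨i - k, by simp⟩

set_option maxHeartbeats 2000000 in
lemma MyQuad.main_est (ψm : ℝ) (h0 : 0 < ψm) (h1 : ψm < π) (V : Fin 4 → E2)
    (hc : ccwQuad V) (hm : ∀ i, ψm ≤ intAngle V i)
    (hbig : π - ψm/2 < intAngle V 1) :
    Metric.diam (quadSet V) / rho (quadSet V) ≤ 9 / Real.sin (ψm/2)^6 := by
  have hpi := Real.pi_pos
  set s := Real.sin (ψm/2) with hsdef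
  have hs : 0 < s := Real.sin_pos_of_pos_of_lt_pi (by linarith) (by linarith)
  have hs1 : s ≤ 1 := Real.sin_le_one _
  have c0 := hc 0; have c1 := hc 1; have c2 := hc 2; have c3 := hc 3
  rw [show (0:Fin 4)+1 = 1 by decide, show (0:Fin 4)+2 = 2 by decide] at c0
  rw [show (1:Fin 4)+1 = 2 by decide, show (1:Fin 4)+2 = 3 by decide] at c1
  rw [show (2:Fin 4)+1 = 3 by decide, show (2:Fin 4)+2 = 0 by decide] at c2
  rw [show (3:Fin 4)+1 = 0 by decide, show (3:Fin 4)+2 = 1 by decide] at c3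
  -- derived positive crosses
  have cS : 0 < cross2 (V 2 - V 0) (V 3 - V 0) := by
    rw [MyQuad.cross2_cyc]; exact c2
  have c01 : 0 < cross2 (V 2 - V 1) (V 0 - V 1) := by
    rw [← MyQuad.cross2_cyc]; exact c0
  have c02 : 0 < cross2 (V 0 - V 2) (V 1 - V 2) := by
    rw [← MyQuad.cross2_cyc]; exact c01
  have cUW : 0 < cross2 (V 1 - V 0) (V 3 - V 0) := by
    rw [← MyQuad.cross2_cyc]; exact c3
  have c12 : 0 < cross2 (V 3 - V 2) (V 1 - V 2) := by
    rw [← MyQuad.cross2_cyc]; exact c1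
  have cD : 0 < cross2 (V 0 - V 3) (V 2 - V 3) := by
    rw [← MyQuad.cross2_cyc (V 2) (V 3) (V 0)]; exact c2
  -- distinct points
  obtain ⟨h01, h02, h12⟩ := MyQuad.cross_ne c0
  obtain ⟨h02', h03, h23⟩ := MyQuad.cross_ne cS
  -- distances
  set d := dist (V 0) (V 2) with hd
  set e := dist (V 0) (V 3) with he
  set f := dist (V 2) (V 3) with hf
  set p := dist (V 0) (V 1) with hp
  set q := dist (V 1) (V 2) with hq
  have hd0 : 0 < d := dist_pos.mpr h02
  have he0 : 0 < e := dist_pos.mpr h03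
  have hf0 : 0 < f := dist_pos.mpr h23
  have hp0 : 0 < p := dist_pos.mpr h01
  have hq0 : 0 < q := dist_pos.mpr h12
  -- angles
  set a := EuclideanGeometry.angle (V 1) (V 0) (V 2) with ha
  set b := EuclideanGeometry.angle (V 0) (V 2) (V 1) with hb
  set θ1 := intAngle V 1 with hθ1
  set α0 := EuclideanGeometry.angle (V 2) (V 0) (V 3) with hα0
  set α2 := EuclideanGeometry.angle (V 0) (V 2) (V 3) with hα2
  set α3 := intAngle V 3 with hα3
  have hθ1e : θ1 = EuclideanGeometry.angle (V 0) (V 1) (V 2) := by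
    rw [hθ1, intAngle, show (1:Fin 4)-1 = 0 by decide, show (1:Fin 4)+1 = 2 by decide]
  have hα3e : α3 = EuclideanGeometry.angle (V 2) (V 3) (V 0) := by
    rw [hα3, intAngle, show (3:Fin 4)-1 = 2 by decide, show (3:Fin 4)+1 = 0 by decide]
  -- area identities for triangle V0 V1 V2
  have FF1 : p * d * Real.sin a = cross2 (V 1 - V 0) (V 2 - V 0) := MyQuad.cross_angle c0
  have FF2 : q * p * Real.sin θ1 = cross2 (V 1 - V 0) (V 2 - V 0) := by
    have h := MyQuad.cross_angle c01
    rw [dist_comm (V 1) (V 0)] at h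
    rw [hθ1e, EuclideanGeometry.angle_comm]
    exact h.trans (MyQuad.cross2_cyc (V 0) (V 1) (V 2)).symm
  have FF3 : d * q * Real.sin b = cross2 (V 1 - V 0) (V 2 - V 0) := by
    have h := MyQuad.cross_angle c02
    rw [dist_comm (V 2) (V 0), dist_comm (V 2) (V 1)] at h
    rw [hb]
    exact h.trans ((MyQuad.cross2_cyc (V 0) (V 1) (V 2)).trans
      (MyQuad.cross2_cyc (V 1) (V 2) (V 0))).symm
  -- area identities for triangle V0 V2 V3
  have EA : d * e * Real.sin α0 = cross2 (V 2 - V 0) (V 3 - V 0) := MyQuad.cross_angle cS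
  have EC : f * d * Real.sin α2 = cross2 (V 2 - V 0) (V 3 - V 0) := by
    have h := MyQuad.cross_angle c2
    rw [dist_comm (V 2) (V 0)] at h
    rw [hα2, EuclideanGeometry.angle_comm]
    exact h.trans (MyQuad.cross2_cyc (V 0) (V 2) (V 3)).symm
  have ED : e * f * Real.sin α3 = cross2 (V 2 - V 0) (V 3 - V 0) := by
    have h := MyQuad.cross_angle cD
    rw [dist_comm (V 3) (V 0), dist_comm (V 3) (V 2)] at h
    rw [hα3e, EuclideanGeometry.angle_comm]
    exact h.trans ((MyQuad.cross2_cyc (V 0) (V 2) (V 3)).trans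
      (MyQuad.cross2_cyc (V 2) (V 3) (V 0))).symm
  -- angle sums
  have Sum1 : θ1 + b + a = π := by
    have h := EuclideanGeometry.angle_add_angle_add_angle_eq_pi
      (p₁ := V 0) (p₂ := V 1) (V 2) h01.symm
    rw [EuclideanGeometry.angle_comm (V 1) (V 2) (V 0),
      EuclideanGeometry.angle_comm (V 2) (V 0) (V 1), ← hθ1e] at h
    exact h
  have Sum2 : α2 + α3 + α0 = π := by
    have h := EuclideanGeometry.angle_add_angle_add_angle_eq_pi
      (p₁ := V 0) (p₂ := V 2) (V 3) h02.symm
    rw [EuclideanGeometry.angle_comm (V 3) (V 0) (V 2), ← hα3e] at h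
    exact h
  -- additivity of angles at V0 and V2
  have Add0 : a + α0 = EuclideanGeometry.angle (V 1) (V 0) (V 3) := by
    have h := MyQuad.angle_add_of_cross
      (sub_ne_zero.mpr h01.symm) (sub_ne_zero.mpr h02.symm) (sub_ne_zero.mpr h03.symm)
      c0 cS cUW
    rw [← MyQuad.eangle_eq, ← MyQuad.eangle_eq, ← MyQuad.eangle_eq] at h
    exact h
  have Add2 : α2 + b = EuclideanGeometry.angle (V 3) (V 2) (V 1) := by
    have h := MyQuad.angle_add_of_cross
      (sub_ne_zero.mpr (fun hh : V 3 = V 2 => h23 hh.symm))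
      (sub_ne_zero.mpr (fun hh : V 0 = V 2 => h02 hh))
      (sub_ne_zero.mpr (fun hh : V 1 = V 2 => h12 hh))
      c2 c02 c12
    rw [← MyQuad.eangle_eq, ← MyQuad.eangle_eq, ← MyQuad.eangle_eq] at h
    rw [hα2, EuclideanGeometry.angle_comm (V 0) (V 2) (V 3)]
    exact h
  have hmac0 : ψm ≤ EuclideanGeometry.angle (V 1) (V 0) (V 3) := by
    have h := hm 0
    rw [intAngle, show (0:Fin 4)-1 = 3 by decide, show (0:Fin 4)+1 = 1 by decide,
      EuclideanGeometry.angle_comm] at h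
    exact h
  have hmac2 : ψm ≤ EuclideanGeometry.angle (V 3) (V 2) (V 1) := by
    have h := hm 2
    rw [intAngle, show (2:Fin 4)-1 = 1 by decide, show (2:Fin 4)+1 = 3 by decide,
      EuclideanGeometry.angle_comm] at h
    exact h
  have hmac3 : ψm ≤ α3 := hm 3
  -- basic angle facts
  have ha0 : 0 ≤ a := EuclideanGeometry.angle_nonneg _ _ _
  have hb0 : 0 ≤ b := EuclideanGeometry.angle_nonneg _ _ _
  have hab : a + b < ψm / 2 := by linarith [hbig, Sum1]
  have hsθ1 : Real.sin θ1 = Real.sin (a + b) := by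
    rw [show θ1 = π - (a + b) by linarith, Real.sin_pi_sub]
  have habpi : a + b ≤ π/2 := by linarith
  have hsina_le : Real.sin a ≤ Real.sin θ1 := by
    rw [hsθ1]
    exact Real.strictMonoOn_sin.monotoneOn ⟨by linarith, by linarith⟩
      ⟨by linarith, habpi⟩ (by linarith)
  have hsinb_le : Real.sin b ≤ Real.sin θ1 := by
    rw [hsθ1]
    exact Real.strictMonoOn_sin.monotoneOn ⟨by linarith, by linarith⟩
      ⟨by linarith, habpi⟩ (by linarith)
  have hsinθ_pos : 0 < Real.sin θ1 := by
    by_contra hneg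
    push_neg at hneg
    have h2 : q * p * Real.sin θ1 ≤ 0 :=
      mul_nonpos_of_nonneg_of_nonpos (mul_pos hq0 hp0).le hneg
    rw [FF2] at h2
    linarith
  -- q ≤ d and p ≤ d
  have hqd : q * Real.sin θ1 = d * Real.sin a := by
    apply mul_left_cancel₀ (ne_of_gt hp0)
    linear_combination FF2.trans FF1.symm
  have hpd : p * Real.sin θ1 = d * Real.sin b := by
    apply mul_left_cancel₀ (ne_of_gt hq0)
    linear_combination FF2.trans FF3.symm
  have hq_le : q ≤ d := by
    have h2 : d * Real.sin a ≤ d * Real.sin θ1 := mul_le_mul_of_nonneg_left hsina_le hd0.le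
    have h3 : q * Real.sin θ1 ≤ d * Real.sin θ1 := by linarith
    exact le_of_mul_le_mul_right h3 hsinθ_pos
  have hp_le : p ≤ d := by
    have h2 : d * Real.sin b ≤ d * Real.sin θ1 := mul_le_mul_of_nonneg_left hsinb_le hd0.le
    have h3 : p * Real.sin θ1 ≤ d * Real.sin θ1 := by linarith
    exact le_of_mul_le_mul_right h3 hsinθ_pos
  -- lower bounds on the angles of triangle V0 V2 V3
  have hα0_lb : ψm/2 ≤ α0 := by linarith [Add0, hmac0]
  have hα2_lb : ψm/2 ≤ α2 := by linarith [Add2, hmac2]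
  have hα00 : 0 ≤ α0 := EuclideanGeometry.angle_nonneg _ _ _
  have hα20 : 0 ≤ α2 := EuclideanGeometry.angle_nonneg _ _ _
  have hψ2 : ψm/2 ≤ π/2 := by linarith
  have hsα0 : s ≤ Real.sin α0 :=
    MyQuad.sin_lb (by linarith) hψ2 hα0_lb (by linarith [Sum2, hmac3, hα2_lb])
  have hsα2 : s ≤ Real.sin α2 :=
    MyQuad.sin_lb (by linarith) hψ2 hα2_lb (by linarith [Sum2, hmac3, hα0_lb])
  have hsα3 : s ≤ Real.sin α3 :=
    MyQuad.sin_lb (by linarith) hψ2 (by linarith [hmac3]) (by linarith [Sum2, hα0_lb, hα2_lb])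
  have hsle2 : Real.sin α2 ≤ 1 := Real.sin_le_one _
  have hsle3 : Real.sin α3 ≤ 1 := Real.sin_le_one _
  have hsle0 : Real.sin α0 ≤ 1 := Real.sin_le_one _
  -- side comparisons in triangle V0 V2 V3
  have hde : d * Real.sin α2 = e * Real.sin α3 := by
    apply mul_left_cancel₀ (ne_of_gt hf0)
    linear_combination EC.trans ED.symm
  have hef : e * Real.sin α0 = f * Real.sin α2 := by
    apply mul_left_cancel₀ (ne_of_gt hd0)
    linear_combination EA.trans EC.symm
  have hes : e * s ≤ d := by
    have h2 : e * s ≤ e * Real.sin α3 := mul_le_mul_of_nonneg_left hsα3 he0.le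
    have h3 : d * Real.sin α2 ≤ d * 1 := mul_le_mul_of_nonneg_left hsle2 hd0.le
    have h4 : d * 1 = d := by ring
    linarith
  have hse : d * s ≤ e := by
    have h2 : d * s ≤ d * Real.sin α2 := mul_le_mul_of_nonneg_left hsα2 hd0.le
    have h3 : e * Real.sin α3 ≤ e * 1 := mul_le_mul_of_nonneg_left hsle3 he0.le
    have h4 : e * 1 = e := by ring
    linarith
  have hfs : f * s ≤ e := by
    have h2 : f * s ≤ f * Real.sin α2 := mul_le_mul_of_nonneg_left hsα2 hf0.le
    have h3 : e * Real.sin α0 ≤ e * 1 := mul_le_mul_of_nonneg_left hsle0 he0.le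
    have h4 : e * 1 = e := by ring
    linarith
  have hfs2 : f * s^2 ≤ d := by
    have h2 : f * s * s ≤ e * s := mul_le_mul_of_nonneg_right hfs hs.le
    have h3 : f * s^2 = f * s * s := by ring
    linarith
  have hSv_lb : s^2 * (d*d) ≤ cross2 (V 2 - V 0) (V 3 - V 0) := by
    have h1 : d * e * s ≤ d * e * Real.sin α0 :=
      mul_le_mul_of_nonneg_left hsα0 (by positivity)
    have h2 : d * (d * s) ≤ d * e := mul_le_mul_of_nonneg_left hse hd0.le
    have h3 : d * (d * s) * s ≤ d * e * s := mul_le_mul_of_nonneg_right h2 hs.le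
    have hsin0nn : (0:ℝ) ≤ Real.sin α0 := le_trans hs.le hsα0
    have h4 : d * e * Real.sin α0 * s ≤ d * e * Real.sin α0 := by
      have := mul_le_mul_of_nonneg_left hs1
        (mul_nonneg (mul_nonneg hd0.le he0.le) hsin0nn)
      linarith [this]
    have h5 : s^2 * (d*d) = d * (d * s) * s := by ring
    linarith
  -- diameter bound
  have hrad : ∀ i : Fin 4, dist (V i) (V 0) ≤ d / s := by
    intro i
    have hds : d ≤ d / s := by
      rw [le_div_iff₀ hs]
      have := mul_le_mul_of_nonneg_left hs1 hd0.le
      linarith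
    fin_cases i
    · show dist (V 0) (V 0) ≤ d / s
      rw [dist_self]; positivity
    · show dist (V 1) (V 0) ≤ d / s
      rw [dist_comm]; exact le_trans hp_le hds
    · show dist (V 2) (V 0) ≤ d / s
      rw [dist_comm]; exact hds
    · show dist (V 3) (V 0) ≤ d / s
      rw [dist_comm, le_div_iff₀ hs]
      exact hes
  have hdiam : Metric.diam (quadSet V) ≤ 2 * (d / s) := by
    rw [quadSet, convexHull_diam]
    apply Metric.diam_le_of_forall_dist_le (by positivity)
    rintro x ⟨i, rfl⟩ y ⟨j, rfl⟩
    calc dist (V i) (V j) ≤ dist (V i) (V 0) + dist (V 0) (V j) := dist_triangle _ _ _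
      _ ≤ d/s + d/s := by
          have h1 := hrad i
          have h2 := hrad j
          rw [dist_comm (V 0) (V j)]
          linarith
      _ = 2 * (d/s) := by ring
  -- inradius bound
  have hball := MyQuad.ball_subset_triangle (V 0) (V 2) (V 3) cS
  have hsubset : convexHull ℝ ({V 0, V 2, V 3} : Set E2) ⊆ quadSet V := by
    rw [quadSet]
    apply convexHull_mono
    intro x hx
    simp only [Set.mem_insert_iff, Set.mem_singleton_iff] at hx
    rcases hx with rfl | rfl | rfl
    · exact ⟨0, rfl⟩
    · exact ⟨2, rfl⟩
    · exact ⟨3, rfl⟩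
  have hbK : Bornology.IsBounded (quadSet V) := by
    rw [quadSet]
    exact isBounded_convexHull.mpr (Set.finite_range V).isBounded
  set Sv := cross2 (V 2 - V 0) (V 3 - V 0) with hSvdef
  set rr := Sv / (3 * (d + e + f)) with hrr
  have hrr0 : 0 ≤ rr := by positivity
  have hrho : 2 * rr ≤ rho (quadSet V) :=
    MyQuad.rho_ge hbK hrr0 (Set.Subset.trans hball hsubset)
  have hr_lb : s^4 * d / 9 ≤ rr := by
    rw [hrr, div_le_div_iff₀ (by norm_num) (by positivity)]
    have hs2le : s^2 ≤ 1 := by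
      have := mul_le_mul_of_nonneg_left hs1 hs.le
      calc s^2 = s * s := sq s
        _ ≤ s * 1 := this
        _ ≤ 1 := by linarith
    have i1 : s^4 * (d * e) ≤ s^2 * (d*d) := by
      calc s^4 * (d * e) = (s^3 * d) * (e * s) := by ring
        _ ≤ (s^3 * d) * d := mul_le_mul_of_nonneg_left hes (by positivity)
        _ = s * (s^2 * (d * d)) := by ring
        _ ≤ 1 * (s^2 * (d * d)) := mul_le_mul_of_nonneg_right hs1 (by positivity)
        _ = s^2 * (d*d) := by ring
    have i2 : s^4 * (d * f) ≤ s^2 * (d*d) := by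
      calc s^4 * (d * f) = (s^2 * d) * (f * s^2) := by ring
        _ ≤ (s^2 * d) * d := mul_le_mul_of_nonneg_left hfs2 (by positivity)
        _ = s^2 * (d*d) := by ring
    have i3 : s^4 * (d * d) ≤ s^2 * (d*d) := by
      calc s^4 * (d * d) = s^2 * (s^2 * (d*d)) := by ring
        _ ≤ 1 * (s^2 * (d*d)) := mul_le_mul_of_nonneg_right hs2le (by positivity)
        _ = s^2 * (d*d) := by ring
    have expand : s^4 * d * (3*(d+e+f)) = 3*(s^4*(d*d)) + 3*(s^4*(d*e)) + 3*(s^4*(d*f)) := by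
      ring
    linarith
  -- final computation
  have hrho' : 2 * (s^4 * d / 9) ≤ rho (quadSet V) := by linarith
  have hfinal : Metric.diam (quadSet V) / rho (quadSet V)
      ≤ (2 * (d/s)) / (2 * (s^4 * d / 9)) := by
    apply div_le_div₀ (by positivity) hdiam (by positivity) hrho'
  have hcomp : (2 * (d/s)) / (2 * (s^4 * d / 9)) = 9 / s^5 := by
    field_simp
  have hlast : 9 / s^5 ≤ 9 / s^6 := by
    rw [div_le_div_iff₀ (by positivity) (by positivity)]
    have h2 := pow_le_pow_of_le_one hs.le hs1 (show 5 ≤ 6 by norm_num)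
    linarith
  rw [hcomp] at hfinal
  linarith

/-- Every convex quadrilateral satisfying `mac(ψm)` either satisfies
`DAC(ψm, π − ψm/2)` or is σ-regular, with `σ` depending only on `ψm`. -/
theorem mac_implies_DAC_or_regular (ψm : ℝ) (h0 : 0 < ψm) (h1 : ψm < π) :
    ∃ σ : ℝ, 0 < σ ∧
      ∀ V : Fin 4 → E2, ccwQuad V →
        (∀ i : Fin 4, ψm ≤ intAngle V i) →
        (∀ i : Fin 4, ψm ≤ intAngle V i ∧ intAngle V i ≤ π - ψm / 2) ∨
          Metric.diam (quadSet V) / rho (quadSet V) ≤ σ := by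
  have hpi := Real.pi_pos
  have hs : 0 < Real.sin (ψm/2) :=
    Real.sin_pos_of_pos_of_lt_pi (by linarith) (by linarith)
  refine ⟨9 / Real.sin (ψm/2)^6, by positivity, ?_⟩
  intro V hc hm
  by_cases H : ∀ i : Fin 4, intAngle V i ≤ π - ψm / 2
  · exact Or.inl fun i => ⟨hm i, H i⟩
  · push_neg at H
    obtain ⟨i, hi⟩ := H
    right
    set W : Fin 4 → E2 := fun j => V (j + (i - 1)) with hW
    have hWc : ccwQuad W := MyQuad.ccw_rot V (i - 1) hc
    have hWm : ∀ j, ψm ≤ intAngle W j := by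
      intro j; rw [hW, MyQuad.intAngle_rot]; exact hm _
    have hWbig : π - ψm / 2 < intAngle W 1 := by
      rw [hW, MyQuad.intAngle_rot, show (1 : Fin 4) + (i - 1) = i by generalize i = j; revert j; decide]
      exact hi
    have hQ : quadSet W = quadSet V := by
      rw [quadSet, quadSet, hW, MyQuad.range_rot]
    have h := MyQuad.main_est ψm h0 h1 W hWc hWm hWbig
    rwa [hQ] at h
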